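/- arXiv:1705.10427 — 9 statements merged into one kernel-verified Lean document; each statement's English description precedes it below -/
import Mathlib

section
/- Let Σ = ⋃_{i∈I} Σ_i with I a finite index set, let Σ_{i,uc} ⊆ Σ_i for each i, and let Σ_uc = {σ ∈ Σ : for every i ∈ I, if σ ∈ Σ_i then σ ∈ Σ_{i,uc}}. For each i let M_i ⊆ Σ_i^* be a prefix-closed language and set M = ⋂_{i∈I} P_{Σ_i}^{-1}(M_i). Suppose L ⊆ M is a nonempty prefix-closed language such that (1) L = ⋂_{i∈I} P_{Σ_i}^{-1}(P_{Σ_i}(L)), and (2) for each i ∈ I, P_{Σ_i}(L)·Σ_{i,uc} ∩ M_i ⊆ P_{Σ_i}(L). Then L is controllable with respect to M and Σ_uc, that is, L·Σ_uc ∩ M ⊆ L. -/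
/-- Natural projection: delete every letter not in `A`. -/
noncomputable def natProj {α : Type*} (A : Set α) (w : List α) : List α :=
  w.filter (fun a => @decide (a ∈ A) (Classical.propDecidable _))

/-- Words all of whose letters lie in `A` (i.e. `A^*`). -/
def wordsOver {α : Type*} (A : Set α) : Set (List α) := {w | ∀ a ∈ w, a ∈ A}

/-- Inverse projection of a language `K` over the subalphabet `A`. -/
def invProj {α : Type*} (A : Set α) (K : Set (List α)) : Set (List α) :=
  {t | natProj A t ∈ K}

/-- A language is prefix-closed if every prefix of every word in it belongs to it. -/
def PrefixClosed {α : Type*} (L : Set (List α)) : Prop :=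
  ∀ u v : List α, u <+: v → v ∈ L → u ∈ L

/-- Concatenation of two languages: `A·B = {st : s ∈ A, t ∈ B}`. -/
def catL {α : Type*} (A B : Set (List α)) : Set (List α) :=
  {w | ∃ s ∈ A, ∃ t ∈ B, w = s ++ t}

/-- One-letter extension: `K·E = {sσ : s ∈ K, σ ∈ E}`. -/
def extL {α : Type*} (K : Set (List α)) (E : Set α) : Set (List α) :=
  {w | ∃ s ∈ K, ∃ σ ∈ E, w = s ++ [σ]}

/-- Quotient of languages: `L₁/L₂ = {s : ∃ t ∈ L₂, st ∈ L₁}`. -/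
def quotL {α : Type*} (L₁ L₂ : Set (List α)) : Set (List α) :=
  {s | ∃ t ∈ L₂, s ++ t ∈ L₁}

/-- Prefix closure of a language. -/
def preL {α : Type*} (K : Set (List α)) : Set (List α) :=
  {u | ∃ w ∈ K, u <+: w}

/-- `K` is controllable w.r.t. the plant language `M` and uncontrollable events `Suc`:
`pre(K)·Σ_uc ∩ M ⊆ pre(K)`. -/
def Controllable {α : Type*} (M : Set (List α)) (Suc : Set α) (K : Set (List α)) : Prop :=
  extL (preL K) Suc ∩ M ⊆ preL K

/-- The supremal controllable sublanguage of `L` w.r.t. `M` and `Suc`: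
the union of all controllable sublanguages of `L`. -/
def supC {α : Type*} (M : Set (List α)) (Suc : Set α) (L : Set (List α)) : Set (List α) :=
  ⋃₀ {K | K ⊆ L ∧ Controllable M Suc K}

/-- Theorem 8: a nonempty prefix-closed language that is separately controllable
(separable, with each projection locally controllable) is globally controllable
w.r.t. the plant `M = ⋂ i, P_{Σᵢ}⁻¹(Mᵢ)` and the global uncontrollable events
`Σ_uc = {σ : ∀ i, σ ∈ Σᵢ → σ ∈ Σᵢ,uc}`. -/
theorem stmt_4 {α ι : Type*} [Fintype α] [Fintype ι]
    (A : ι → Set α) (hcov : (⋃ i, A i) = Set.univ)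
    (U : ι → Set α) (hU : ∀ i, U i ⊆ A i)
    (M : ι → Set (List α)) (hMw : ∀ i, M i ⊆ wordsOver (A i))
    (hMpc : ∀ i, PrefixClosed (M i))
    (L : Set (List α)) (hne : L.Nonempty) (hpc : PrefixClosed L)
    (hLM : L ⊆ ⋂ i, invProj (A i) (M i))
    (hsep : L = ⋂ i, invProj (A i) (natProj (A i) '' L))
    (hctrl : ∀ i, extL (natProj (A i) '' L) (U i) ∩ M i ⊆ natProj (A i) '' L) :
    extL L {σ | ∀ i, σ ∈ A i → σ ∈ U i} ∩ (⋂ i, invProj (A i) (M i)) ⊆ L := by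
  rintro w ⟨⟨s, hs, σ, hσ, rfl⟩, hwM⟩
  rw [hsep]
  intro T hT
  simp only [Set.mem_range] at hT
  obtain ⟨i, rfl⟩ := hT
  simp only [invProj, Set.mem_setOf_eq, natProj, List.filter_append, List.filter_cons,
    List.filter_nil]
  by_cases hAi : σ ∈ A i
  · rw [if_pos (by simpa using hAi)]
    apply hctrl i
    constructor
    · exact ⟨natProj (A i) s, ⟨s, hs, rfl⟩, σ, hσ i hAi, rfl⟩
    · have := Set.mem_iInter.1 hwM i
      simpa [invProj, natProj, List.filter_append, List.filter_cons, hAi] using this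
  · rw [if_neg (by simpa using hAi)]
    simpa [natProj] using ⟨s, hs, rfl⟩
end

section
/- Let Σ be a finite alphabet, Σ_uc ⊆ Σ, M ⊆ Σ^* a prefix-closed language (the plant language), and L ⊆ M a prefix-closed language. Then the supremal controllable sublanguage of L with respect to M and Σ_uc is given by the explicit formula sup C(L) = L − ((M − L)/Σ_uc^*)·Σ^*, and moreover sup C(L) is prefix-closed. -/
/-- Lemma 1 (prefix-closed case, equation (11)): the supremal controllable
sublanguage of a prefix-closed `L ⊆ M` is `L − ((M − L)/Σ_uc^*)·Σ^*`,
and it is prefix-closed. -/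
theorem stmt_6 {α : Type*} [Fintype α] (Suc : Set α) (M L : Set (List α))
    (hM : PrefixClosed M) (hLM : L ⊆ M) (hL : PrefixClosed L) :
    supC M Suc L = L \ catL (quotL (M \ L) (wordsOver Suc)) Set.univ ∧
      PrefixClosed (supC M Suc L) := by
  set R := L \ catL (quotL (M \ L) (wordsOver Suc)) Set.univ with hR
  -- R is prefix-closed
  have hRpc : PrefixClosed R := by
    intro u v huv hv
    obtain ⟨hvL, hvbad⟩ := hv
    refine ⟨hL u v huv hvL, ?_⟩
    rintro ⟨s, hs, t, -, rfl⟩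
    obtain ⟨r, rfl⟩ := huv
    exact hvbad ⟨s, hs, t ++ r, trivial, by simp⟩
  have preL_eq : ∀ (K : Set (List α)), PrefixClosed K → preL K = K := by
    intro K hK
    ext u
    exact ⟨fun ⟨w, hw, hp⟩ => hK u w hp hw, fun h => ⟨u, h, List.prefix_refl u⟩⟩
  -- R is controllable
  have hRctrl : Controllable M Suc R := by
    rw [Controllable, preL_eq R hRpc]
    rintro w ⟨⟨s, hs, σ, hσ, rfl⟩, hM'⟩
    obtain ⟨hsL, hsbad⟩ := hs
    have hsσL : s ++ [σ] ∈ L := by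
      by_contra hnl
      exact hsbad ⟨s, ⟨[σ], fun a ha => (List.mem_singleton.mp ha) ▸ hσ,
        ⟨hM', hnl⟩⟩, [], trivial, by simp⟩
    refine ⟨hsσL, ?_⟩
    rintro ⟨p, hp, t, -, het⟩
    rcases List.eq_nil_or_concat t with rfl | ⟨t', a, rfl⟩
    · -- t = [], so p = s ++ [σ]
      simp only [List.append_nil] at het
      obtain ⟨u, hu, hmem⟩ := hp
      rw [← het] at hmem
      refine hsbad ⟨s, ⟨σ :: u, ?_, by simpa using hmem⟩, [], trivial, by simp⟩
      intro a ha
      rcases List.mem_cons.mp ha with rfl | ha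
      · exact hσ
      · exact hu a ha
    · -- t = t' ++ [a]
      rw [List.concat_eq_append, ← List.append_assoc] at het
      have := List.append_inj' het (by simp)
      obtain ⟨h1, h2⟩ := this
      exact hsbad ⟨p, hp, t', trivial, h1⟩
  -- every controllable K ⊆ L is contained in R
  have hsup : ∀ K : Set (List α), K ⊆ L → Controllable M Suc K → K ⊆ R := by
    intro K hKL hKc w hw
    refine ⟨hKL hw, ?_⟩
    rintro ⟨p, ⟨u, hu, hpu⟩, t, -, rfl⟩
    have hpreKL : preL K ⊆ L := by
      rintro x ⟨y, hy, hxy⟩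
      exact hL x y hxy (hKL hy)
    -- p ∈ preL K
    have hpK : p ∈ preL K := ⟨p ++ t, hw, ⟨t, rfl⟩⟩
    -- show p ++ u ∈ preL K by reverse induction on u
    have key : ∀ u : List α, (∀ a ∈ u, a ∈ Suc) → p ++ u ∈ M → p ++ u ∈ preL K := by
      intro u
      induction u using List.reverseRecOn with
      | nil => intro _ _; simpa using hpK
      | append_singleton u' σ ih =>
        intro hall hmem
        have h1 : p ++ u' ∈ preL K := by
          refine ih (fun a ha => hall a (by simp [ha])) ?_
          exact hM (p ++ u') (p ++ (u' ++ [σ])) ⟨[σ], by simp⟩ hmem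
        have h2 : σ ∈ Suc := hall σ (by simp)
        exact hKc ⟨⟨p ++ u', h1, σ, h2, by simp⟩, by simpa using hmem⟩
    have := hpreKL (key u hu hpu.1)
    exact hpu.2 this
  have hEq : supC M Suc L = R := by
    apply Set.Subset.antisymm
    · rintro w ⟨K, ⟨hK1, hK2⟩, hwK⟩
      exact hsup K hK1 hK2 hwK
    · intro w hw
      exact ⟨R, ⟨fun x hx => hx.1, hRctrl⟩, hw⟩
  exact ⟨hEq, hEq ▸ hRpc⟩
end

section
/- Let Σ be a finite alphabet, Σ_uc ⊆ Σ, and let M, L ⊆ Σ^* be languages with L prefix-closed. Then the language R = L − ((M − L)/Σ_uc^*)·Σ^* is prefix-closed. -/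
/-- If `L` is prefix-closed then `L − ((M − L)/Σ_uc^*)·Σ^*` is prefix-closed. -/
theorem stmt_7 {α : Type*} [Fintype α] (Suc : Set α) (M L : Set (List α))
    (hL : PrefixClosed L) :
    PrefixClosed (L \ catL (quotL (M \ L) (wordsOver Suc)) Set.univ) := by
  intro u v huv ⟨hvL, hvB⟩
  refine ⟨hL u v huv hvL, ?_⟩
  rintro ⟨s, hs, t, -, rfl⟩
  obtain ⟨r, rfl⟩ := huv
  exact hvB ⟨s, hs, t ++ r, trivial, by simp⟩
end

section
/- Let Σ be a finite alphabet, Σ_uc ⊆ Σ, M ⊆ Σ^* a language, and L ⊆ M a prefix-closed language. Then the language R = L − ((M − L)/Σ_uc^*)·Σ^* is controllable with respect to M and Σ_uc; in particular R·Σ_uc ∩ M ⊆ R. -/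
/-- The explicitly computed language `R = L − ((M − L)/Σ_uc^*)·Σ^*` is controllable
w.r.t. `M` and `Σ_uc`; in particular `R·Σ_uc ∩ M ⊆ R`. -/
theorem stmt_8 {α : Type*} [Fintype α] (Suc : Set α) (M L : Set (List α))
    (hLM : L ⊆ M) (hL : PrefixClosed L)
    (R : Set (List α))
    (hR : R = L \ catL (quotL (M \ L) (wordsOver Suc)) Set.univ) :
    Controllable M Suc R ∧ extL R Suc ∩ M ⊆ R := by
  subst hR
  set Q := quotL (M \ L) (wordsOver Suc) with hQ
  set R := L \ catL Q Set.univ with hRdef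
  -- key: extL R Suc ∩ M ⊆ R
  have key : extL R Suc ∩ M ⊆ R := by
    rintro w ⟨⟨s, hs, σ, hσ, rfl⟩, hwM⟩
    obtain ⟨hsL, hsN⟩ := hs
    -- w ∈ L
    have hwL : s ++ [σ] ∈ L := by
      by_contra hw
      apply hsN
      exact ⟨s, ⟨[σ], by intro a ha; simp at ha; subst ha; exact hσ, ⟨hwM, hw⟩⟩,
        [], trivial, by simp⟩
    refine ⟨hwL, ?_⟩
    rintro ⟨u, hu, t, -, het⟩
    obtain ⟨v, hv, huv⟩ := hu
    -- u <+: s ++ [σ]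
    have hup : u <+: s ++ [σ] := ⟨t, het.symm⟩
    rcases List.prefix_concat_iff.mp hup with h | h
    · -- u = s ++ [σ] : then s ∈ Q via σ :: v
      apply hsN
      refine ⟨s, ⟨σ :: v, ?_, ?_⟩, [], trivial, by simp⟩
      · intro a ha
        rcases List.mem_cons.mp ha with rfl | ha
        · exact hσ
        · exact hv a ha
      · simpa [h, List.append_assoc] using huv
    · -- u <+: s : then s ∈ catL Q univ
      obtain ⟨r, hr⟩ := h
      exact hsN ⟨u, ⟨v, hv, huv⟩, r, trivial, hr.symm⟩
  -- R is prefix-closed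
  have hRpc : PrefixClosed R := by
    rintro u v huv ⟨hvL, hvN⟩
    refine ⟨hL u v huv hvL, ?_⟩
    rintro ⟨a, ha, t, -, rfl⟩
    obtain ⟨r, rfl⟩ := huv
    exact hvN ⟨a, ha, t ++ r, trivial, by simp⟩
  have hpre : preL R = R := by
    ext u
    constructor
    · rintro ⟨w, hw, hu⟩; exact hRpc u w hu hw
    · intro hu; exact ⟨u, hu, List.prefix_refl u⟩
  refine ⟨?_, key⟩
  unfold Controllable
  rw [hpre]
  exact key
end

section
/- Let Σ be a finite alphabet, Σ_uc ⊆ Σ, M ⊆ Σ^* a prefix-closed language, and L ⊆ M a prefix-closed language. If K ⊆ L is any language that is controllable with respect to M and Σ_uc (i.e., K̄·Σ_uc ∩ M ⊆ K̄, where K̄ is the prefix-closure of K), then K ⊆ L − ((M − L)/Σ_uc^*)·Σ^*. -/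
/-- Supremality in Lemma 1: every controllable sublanguage of `L` is contained in
`L − ((M − L)/Σ_uc^*)·Σ^*`. -/
theorem stmt_9 {α : Type*} [Fintype α] (Suc : Set α) (M L : Set (List α))
    (hM : PrefixClosed M) (hLM : L ⊆ M) (hL : PrefixClosed L)
    (K : Set (List α)) (hKL : K ⊆ L) (hK : Controllable M Suc K) :
    K ⊆ L \ catL (quotL (M \ L) (wordsOver Suc)) Set.univ := by
  have hpreKL : preL K ⊆ L := by
    rintro u ⟨w, hw, hpre⟩
    exact hL u w hpre (hKL hw)
  -- key: extend by uncontrollable words staying in M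
  have key : ∀ (u : List α) (s : List α), u ∈ wordsOver Suc → s ∈ preL K →
      s ++ u ∈ M → s ++ u ∈ preL K := by
    intro u
    induction u with
    | nil => intro s _ hs _; simpa using hs
    | cons σ u ih =>
      intro s hu hs hM'
      have hσ : σ ∈ Suc := hu σ (by simp)
      have h1 : s ++ [σ] ∈ M := by
        apply hM (s ++ [σ]) (s ++ σ :: u) _ hM'
        exact ⟨u, by simp⟩
      have h2 : s ++ [σ] ∈ preL K := hK ⟨⟨s, hs, σ, hσ, rfl⟩, h1⟩
      have := ih (s ++ [σ]) (fun a ha => hu a (by simp [ha])) h2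
        (by simpa using hM')
      simpa using this
  intro w hw
  refine ⟨hKL hw, ?_⟩
  rintro ⟨s, ⟨u, hu, hsu⟩, t, -, rfl⟩
  have hs : s ∈ preL K := ⟨s ++ t, hw, ⟨t, rfl⟩⟩
  have : s ++ u ∈ preL K := key u s hu hs hsu.1
  exact hsu.2 (hpreKL this)
end

section
/- Let Σ be a finite alphabet with subalphabets Σ_A ⊆ Σ and Σ_P ⊆ Σ. Let M ⊆ Σ^* be a language (the component), A ⊆ Σ_A^* a language (the assumption), and P ⊆ Σ_P^* a language (the property). Then the following are equivalent: (i) for every language E ⊆ Σ^*, if P_{Σ_A}(E ∩ M) ⊆ A then P_{Σ_P}(E ∩ M) ⊆ P; (ii) P_{Σ_P}(P_{Σ_A}^{-1}(A) ∩ M) ⊆ P. -/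
/-- Theorem 1 (language-level form): the assume-guarantee triple `⟨A⟩M⟨P⟩`
(every environment `E` for which `E‖M` satisfies `A` makes `E‖M` satisfy `P`)
holds iff `P_{Σ_P}(P_{Σ_A}⁻¹(A) ∩ M) ⊆ P`. -/
theorem stmt_11 {α : Type*} [Fintype α] (SA SP : Set α)
    (M : Set (List α))
    (A : Set (List α)) (hA : A ⊆ wordsOver SA)
    (P : Set (List α)) (hP : P ⊆ wordsOver SP) :
    (∀ E : Set (List α),
        natProj SA '' (E ∩ M) ⊆ A → natProj SP '' (E ∩ M) ⊆ P) ↔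
      natProj SP '' (invProj SA A ∩ M) ⊆ P := by
  constructor
  · intro h
    apply h (invProj SA A)
    rintro x ⟨w, ⟨hw, _⟩, rfl⟩
    exact hw
  · intro h E hE
    rintro x ⟨w, ⟨hwE, hwM⟩, rfl⟩
    exact h ⟨w, ⟨hE ⟨w, ⟨hwE, hwM⟩, rfl⟩, hwM⟩, rfl⟩
end

section
/- Let Σ be a finite alphabet with subalphabets Σ_P ⊆ Σ_A ⊆ Σ, let I be a finite index set, and for each i ∈ I let M_i ⊆ Σ^* be a language and A_i ⊆ Σ_A^* a language, and let P ⊆ Σ_P^* be a language. Let Q : Σ_A^* → Σ_P^* denote the natural projection from words over Σ_A to words over Σ_P. Suppose (1) for each i ∈ I, P_{Σ_P}(P_{Σ_A}^{-1}(A_i) ∩ M_i) ⊆ P, and (2) Q(⋂_{i∈I}(Σ_A^* − A_i)) ⊆ P. Then P_{Σ_P}(⋂_{i∈I} M_i) ⊆ P. -/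
lemma natProj_natProj {α : Type*} {SA SP : Set α} (h : SP ⊆ SA) (w : List α) :
    natProj SP (natProj SA w) = natProj SP w := by
  unfold natProj
  rw [List.filter_filter]
  apply List.filter_congr
  intro a _
  by_cases hp : a ∈ SP
  · simp [hp, h hp]
  · simp [hp]

/-- Soundness of the symmetric assume-guarantee proof rule SYM-N: if each triple
`⟨Aᵢ⟩Mᵢ⟨P⟩` holds and the projection of `⋂ i, (Σ_A^* − Aᵢ)` onto `Σ_P` is in `P`,
then the composed system `⋂ i, Mᵢ` satisfies `P`. -/
theorem stmt_12 {α ι : Type*} [Fintype α] [Fintype ι]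
    (SA SP : Set α) (hPA : SP ⊆ SA)
    (M : ι → Set (List α))
    (A : ι → Set (List α)) (hA : ∀ i, A i ⊆ wordsOver SA)
    (P : Set (List α)) (hP : P ⊆ wordsOver SP)
    (h1 : ∀ i, natProj SP '' (invProj SA (A i) ∩ M i) ⊆ P)
    (h2 : natProj SP '' (⋂ i, (wordsOver SA \ A i)) ⊆ P) :
    natProj SP '' (⋂ i, M i) ⊆ P := by
  intro w hw
  obtain ⟨t, ht, rfl⟩ := hw
  by_cases hc : ∃ i, natProj SA t ∈ A i
  · obtain ⟨i, hi⟩ := hc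
    exact h1 i ⟨t, ⟨hi, Set.mem_iInter.mp ht i⟩, rfl⟩
  · push_neg at hc
    have hmem : natProj SA t ∈ ⋂ i, (wordsOver SA \ A i) := by
      refine Set.mem_iInter.mpr fun i => ⟨?_, hc i⟩
      intro a ha
      simp only [natProj, List.mem_filter, decide_eq_true_eq] at ha
      exact ha.2
    have := h2 ⟨natProj SA t, hmem, rfl⟩
    rwa [natProj_natProj hPA] at this
end

section
/- Let Σ be a finite alphabet with subalphabets Σ_A ⊆ Σ and Σ_P ⊆ Σ, let M ⊆ Σ^* and P ⊆ Σ_P^* be languages, and define A^w = {t ∈ Σ_A^* : P_{Σ_P}(P_{Σ_A}^{-1}(pre(t)) ∩ M) ⊆ P}, where pre(t) denotes the set of all prefixes of t. Then A^w is prefix-closed, and for every prefix-closed language A ⊆ Σ_A^*: P_{Σ_P}(P_{Σ_A}^{-1}(A) ∩ M) ⊆ P if and only if A ⊆ A^w. Consequently A^w is the weakest (largest) prefix-closed assumption over Σ_A for which the assume-guarantee triple holds. -/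
/-- Lemma 2 / Definition 9 (language-level form): the weakest assumption
`A^w = {t ∈ Σ_A^* : P_{Σ_P}(P_{Σ_A}⁻¹(pre(t)) ∩ M) ⊆ P}` is prefix-closed, and a
prefix-closed assumption `A ⊆ Σ_A^*` makes the triple hold iff `A ⊆ A^w`. -/
theorem stmt_13 {α : Type*} [Fintype α] (SA SP : Set α)
    (M : Set (List α)) (P : Set (List α)) (hP : P ⊆ wordsOver SP)
    (Aw : Set (List α))
    (hAw : Aw = {t | t ∈ wordsOver SA ∧
      natProj SP '' (invProj SA {u | u <+: t} ∩ M) ⊆ P}) :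
    PrefixClosed Aw ∧
      ∀ A : Set (List α), A ⊆ wordsOver SA → PrefixClosed A →
        (natProj SP '' (invProj SA A ∩ M) ⊆ P ↔ A ⊆ Aw) := by
  subst hAw
  constructor
  · rintro u v huv ⟨hvA, hvP⟩
    refine ⟨fun a ha => hvA a (huv.subset ha), ?_⟩
    refine Set.Subset.trans ?_ hvP
    apply Set.image_mono
    intro w hw
    exact ⟨hw.1.trans huv, hw.2⟩
  · intro A hAsub hApre
    constructor
    · intro h t ht
      refine ⟨hAsub ht, ?_⟩
      refine Set.Subset.trans ?_ h
      apply Set.image_mono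
      rintro w ⟨hw1, hw2⟩
      exact ⟨hApre _ _ hw1 ht, hw2⟩
    · rintro h x ⟨w, ⟨hwA, hwM⟩, rfl⟩
      have ht := h hwA
      exact ht.2 ⟨w, ⟨List.prefix_refl _, hwM⟩, rfl⟩
end

section
/- Let Σ be a finite alphabet, Σ_uc ⊆ Σ, M ⊆ Σ^* a prefix-closed language, and L ⊆ M a prefix-closed language. Define the iteration K_1 = L and K_{j+1} = K_j − ((M − K_j)/Σ_uc)·Σ^* for j ≥ 1, where (M − K_j)/Σ_uc = {s ∈ Σ^* : ∃σ ∈ Σ_uc, sσ ∈ M − K_j}. Then every K_j is prefix-closed, the sequence is decreasing and each K_j contains sup C(L), and if K_{N+1} = K_N for some N, then K_N = sup C(L), the supremal controllable sublanguage of L with respect to M and Σ_uc. -/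
/-- Lemma 1 (equations (9)-(10)), prefix-closed case: the iteration
`K₁ = L`, `K_{j+1} = K_j − ((M − K_j)/Σ_uc)·Σ^*` produces a decreasing sequence of
prefix-closed languages each containing `sup C(L)`, and any fixed point of the
iteration equals `sup C(L)`. -/
theorem stmt_16 {α : Type*} [Fintype α] (Suc : Set α) (M L : Set (List α))
    (hM : PrefixClosed M) (hL : PrefixClosed L) (hLM : L ⊆ M)
    (K : ℕ → Set (List α)) (hK1 : K 1 = L)
    (hKs : ∀ j, 1 ≤ j → K (j + 1) =
      K j \ catL {s | ∃ σ ∈ Suc, s ++ [σ] ∈ M \ K j} Set.univ) :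
    (∀ j, 1 ≤ j → PrefixClosed (K j) ∧ K (j + 1) ⊆ K j ∧ supC M Suc L ⊆ K j) ∧
      ∀ N, 1 ≤ N → K (N + 1) = K N → K N = supC M Suc L := by
  have main : ∀ j, 1 ≤ j → PrefixClosed (K j) ∧ supC M Suc L ⊆ K j ∧ K j ⊆ L := by
    intro j hj
    induction j with
    | zero => omega
    | succ n ih =>
      rcases Nat.lt_or_ge 0 n with h1 | h1
      · have hn : 1 ≤ n := h1
        obtain ⟨hpc, hsup, hsub⟩ := ih hn
        rw [hKs n hn]
        refine ⟨?_, ?_, fun w hw => hsub hw.1⟩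
        · intro u v huv hv
          refine ⟨hpc u v huv hv.1, ?_⟩
          intro hu
          apply hv.2
          obtain ⟨s, hs, t, _, hst⟩ := hu
          obtain ⟨r, hr⟩ := huv
          exact ⟨s, hs, t ++ r, trivial, by rw [← hr, hst, List.append_assoc]⟩
        · intro w hw
          refine ⟨hsup hw, ?_⟩
          rintro ⟨s, ⟨σ, hσ, hsσ⟩, t, -, hst⟩
          obtain ⟨C, ⟨hCL, hCc⟩, hwC⟩ := hw
          have hspre : s ∈ preL C := ⟨w, hwC, ⟨t, hst.symm⟩⟩
          have h1 : s ++ [σ] ∈ preL C := hCc ⟨⟨s, hspre, σ, hσ, rfl⟩, hsσ.1⟩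
          obtain ⟨w', hw'C, hpref⟩ := h1
          exact hsσ.2 (hpc _ w' hpref (hsup ⟨C, ⟨hCL, hCc⟩, hw'C⟩))
      · have hn : n = 0 := by omega
        subst hn
        rw [hK1]
        exact ⟨hL, fun w hw => by obtain ⟨C, ⟨hCL, -⟩, hwC⟩ := hw; exact hCL hwC,
          le_refl _⟩
  constructor
  · intro j hj
    exact ⟨(main j hj).1, by rw [hKs j hj]; exact Set.diff_subset, (main j hj).2.1⟩
  · intro N hN hfix
    obtain ⟨hpc, hsup, hsub⟩ := main N hN
    apply Set.Subset.antisymm _ hsup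
    have hctrl : Controllable M Suc (K N) := by
      rintro w ⟨⟨s, hs, σ, hσ, rfl⟩, hM'⟩
      obtain ⟨w', hw', hpref⟩ := hs
      have hsK : s ∈ K N := hpc s w' hpref hw'
      by_contra hnot
      have hsσK : s ++ [σ] ∉ K N := fun h => hnot ⟨_, h, List.prefix_refl _⟩
      have hns : s ∉ K (N + 1) := by
        rw [hKs N hN]
        rintro ⟨-, h2⟩
        exact h2 ⟨s, ⟨σ, hσ, hM', hsσK⟩, [], trivial, (List.append_nil s).symm⟩
      rw [hfix] at hns
      exact hns hsK
    intro w hw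
    exact ⟨K N, ⟨hsub, hctrl⟩, hw⟩
end
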